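/- Fix v > 0, an integer K ≥ 1, an index k ∈ {1,…,K}, and positive reals s₁, …, s_K (where sⱼ = σ₀ⱼ²/n₀ⱼ is the j-th historical variance-to-sample-size ratio). Define the dataset-specific discounting weight a₀ₖ(s₁,…,s_K) = (sₖ/(sₖ + v)) · [1 + Σⱼ v/(v + sⱼ)]⁻¹ (which equals cₖ(v)f(v) for the BHM-matching normalized power prior). Then, holding v and all sⱼ with j ≠ k fixed, the map sₖ ↦ a₀ₖ is strictly increasing on (0,∞); that is, the BHM-matching NPP discounts a historical dataset more (smaller a₀ₖ) when its effective sample size relative to its variance is larger. -/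

import Mathlib

open Real Set

/-- holding `v` and the other variance-to-sample-size ratios fixed, the
`k`-th dataset-specific discounting weight `a₀ₖ = (sₖ/(sₖ+v))·[1 + Σⱼ v/(v+sⱼ)]⁻¹` of the
BHM-matching normalized power prior is strictly increasing in `sₖ = σ₀ₖ²/n₀ₖ` on `(0,∞)`. -/
theorem stmt_19 (K : ℕ) (hK : 1 ≤ K) (v : ℝ) (hv : 0 < v)
    (s : Fin K → ℝ) (hs : ∀ j, 0 < s j) (k : Fin K)
    (a0k : (Fin K → ℝ) → ℝ)
    (ha0k : ∀ t : Fin K → ℝ,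
      a0k t = (t k / (t k + v)) * (1 + ∑ j, v / (v + t j))⁻¹) :
    StrictMonoOn (fun x : ℝ => a0k (Function.update s k x)) (Ioi (0 : ℝ)) := by
  have hsum : ∀ x : ℝ, ∑ j, v / (v + Function.update s k x j)
      = v / (v + x) + ∑ j ∈ Finset.univ.erase k, v / (v + s j) := by
    intro x
    rw [← Finset.add_sum_erase _ _ (Finset.mem_univ k)]
    congr 1
    · simp
    · refine Finset.sum_congr rfl fun j hj => ?_
      rw [Function.update_of_ne (Finset.ne_of_mem_erase hj)]
  set C : ℝ := ∑ j ∈ Finset.univ.erase k, v / (v + s j) with hCdef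
  have hC : 0 ≤ C := by
    apply Finset.sum_nonneg
    intro j _
    have := hs j
    positivity
  intro x hx y hy hxy
  simp only [ha0k, Function.update_self, hsum]
  have hx0 : (0:ℝ) < x := hx
  have hy0 : (0:ℝ) < y := hy
  have hxv : 0 < x + v := by linarith
  have hyv : 0 < y + v := by linarith
  have hvx : 0 < v + x := by linarith
  have hvy : 0 < v + y := by linarith
  have hDx : 0 < 1 + (v / (v + x) + C) := by positivity
  have hDy : 0 < 1 + (v / (v + y) + C) := by positivity
  rw [← div_eq_mul_inv, ← div_eq_mul_inv, div_lt_div_iff₀ hDx hDy]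
  have key : 0 < v * (y - x) := by nlinarith
  field_simp
  nlinarith [mul_nonneg hC key.le, key, mul_pos hxv hyv, mul_pos hvx hvy,
    mul_nonneg (mul_nonneg hC key.le) (mul_pos hvx hvy).le,
    mul_pos key (mul_pos hvx hvy)]
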